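/- Let γ : [0,L] → ℝ² be a unit-speed curve with γ(0) = (0,−1), γ'(0) = (1,0), and continuous tangent indicatrix ϑ with ϑ(0) = 0 and ϑ(x) ≤ x for all x ∈ [0,L]. Choose h ∈ (0, π/4] such that ϑ([0,h]) ⊆ [−π/4, π/4]. Then for every s ∈ [0,h]: (i) cos s + sin s ≤ γ_x(s) − γ_y(s), and (ii) γ_y(s) ≤ −cos s. -/

import Mathlib

/-- Let `γ : [0,L] → ℝ² ≅ ℂ` be a unit-speed curve with `γ(0) = (0,−1)`, `γ'(0) = (1,0)`,
and continuous tangent indicatrix `ϑ` with `ϑ(0) = 0` and `ϑ(x) ≤ x` on `[0,L]`, where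
`γ(s) = γ(0) + (∫₀ˢ cos ϑ, ∫₀ˢ sin ϑ)`. Choose `h ∈ (0, π/4]` with
`ϑ([0,h]) ⊆ [−π/4, π/4]`. Then for every `s ∈ [0,h]`:
(i) `cos s + sin s ≤ γ_x(s) − γ_y(s)`, and (ii) `γ_y(s) ≤ −cos s`. -/
theorem stmt5 (L : ℝ) (γ : ℝ → ℂ) (ϑ : ℝ → ℝ)
    (hϑc : ContinuousOn ϑ (Set.Icc 0 L))
    (hγ0 : γ 0 = -Complex.I)
    (hϑ0 : ϑ 0 = 0)
    (hϑle : ∀ x ∈ Set.Icc (0 : ℝ) L, ϑ x ≤ x)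
    (hγ : ∀ s ∈ Set.Icc (0 : ℝ) L, γ s = γ 0 +
      ((∫ x in (0 : ℝ)..s, Real.cos (ϑ x) : ℝ) +
        (∫ x in (0 : ℝ)..s, Real.sin (ϑ x) : ℝ) * Complex.I))
    (h : ℝ) (hh : h ∈ Set.Ioc (0 : ℝ) (Real.pi / 4)) (hhL : h ≤ L)
    (hrange : ∀ x ∈ Set.Icc (0 : ℝ) h, ϑ x ∈ Set.Icc (-(Real.pi / 4)) (Real.pi / 4))
    (s : ℝ) (hs : s ∈ Set.Icc (0 : ℝ) h) :
    Real.cos s + Real.sin s ≤ (γ s).re - (γ s).im ∧ (γ s).im ≤ -Real.cos s := by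
  have hπ := Real.pi_pos
  obtain ⟨hs0, hsh⟩ := hs
  have hsL : s ∈ Set.Icc (0 : ℝ) L := ⟨hs0, hsh.trans hhL⟩
  have hsub : Set.uIcc (0 : ℝ) s ⊆ Set.Icc 0 L := by
    rw [Set.uIcc_of_le hs0]
    exact Set.Icc_subset_Icc le_rfl (hsh.trans hhL)
  have hsubh : Set.uIcc (0 : ℝ) s ⊆ Set.Icc 0 h := by
    rw [Set.uIcc_of_le hs0]
    exact Set.Icc_subset_Icc le_rfl hsh
  have hϑc' : ContinuousOn ϑ (Set.uIcc 0 s) := hϑc.mono hsub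
  have hintc : IntervalIntegrable (fun x => Real.cos (ϑ x)) MeasureTheory.volume 0 s :=
    (Real.continuous_cos.comp_continuousOn hϑc').intervalIntegrable
  have hints : IntervalIntegrable (fun x => Real.sin (ϑ x)) MeasureTheory.volume 0 s :=
    (Real.continuous_sin.comp_continuousOn hϑc').intervalIntegrable
  have hre : (γ s).re = ∫ x in (0:ℝ)..s, Real.cos (ϑ x) := by
    rw [hγ s hsL, hγ0]; simp
  have him : (γ s).im = -1 + ∫ x in (0:ℝ)..s, Real.sin (ϑ x) := by
    rw [hγ s hsL, hγ0]; simp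
  -- pointwise facts
  have hpt : ∀ x ∈ Set.Icc (0:ℝ) s,
      Real.sin (ϑ x) ≤ Real.sin x ∧
      Real.cos x - Real.sin x ≤ Real.cos (ϑ x) - Real.sin (ϑ x) := by
    intro x hx
    have hxh : x ∈ Set.Icc (0:ℝ) h := ⟨hx.1, hx.2.trans hsh⟩
    have hxL : x ∈ Set.Icc (0:ℝ) L := ⟨hx.1, hxh.2.trans hhL⟩
    have hϑx := hrange x hxh
    have htle : ϑ x ≤ x := hϑle x hxL
    have hx4 : x ≤ Real.pi / 4 := hxh.2.trans hh.2
    constructor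
    · exact Real.strictMonoOn_sin.monotoneOn ⟨by linarith [hϑx.1], by linarith [hϑx.2]⟩ ⟨by linarith [hxh.1], by linarith⟩ htle
    · have hc : Real.cos (x + Real.pi / 4) ≤ Real.cos (ϑ x + Real.pi / 4) :=
        Real.cos_le_cos_of_nonneg_of_le_pi (by linarith [hϑx.1]) (by linarith) (by linarith)
      rw [Real.cos_add, Real.cos_add, Real.cos_pi_div_four, Real.sin_pi_div_four] at hc
      have h2 : (0:ℝ) < Real.sqrt 2 / 2 := by positivity
      nlinarith [hc, h2]
  -- integral comparisons
  have hIs : ∫ x in (0:ℝ)..s, Real.sin (ϑ x) ≤ 1 - Real.cos s := by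
    have := intervalIntegral.integral_mono_on hs0 hints
      (Real.continuous_sin.intervalIntegrable 0 s) (fun x hx => (hpt x hx).1)
    rw [integral_sin] at this
    simpa using this
  have hIc : Real.sin s + Real.cos s - 1 ≤
      ∫ x in (0:ℝ)..s, (Real.cos (ϑ x) - Real.sin (ϑ x)) := by
    have := intervalIntegral.integral_mono_on hs0
      ((Real.continuous_cos.sub Real.continuous_sin).intervalIntegrable 0 s)
      (hintc.sub hints) (fun x hx => (hpt x hx).2)
    simp only [Pi.sub_apply] at this
    rw [intervalIntegral.integral_sub (Real.continuous_cos.intervalIntegrable 0 s)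
      (Real.continuous_sin.intervalIntegrable 0 s), integral_sin,
      integral_cos] at this
    simp only [Real.sin_zero, Real.cos_zero] at this
    linarith
  rw [intervalIntegral.integral_sub hintc hints] at hIc
  constructor
  · rw [hre, him]; linarith
  · rw [him]; linarith
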